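/- For any real symmetric positive semidefinite d×d matrices A, B, and C, it holds that det(A + B + C) · det(A) ≤ det(A + B) · det(A + C). -/

import Mathlib

open Matrix

variable {d : ℕ}

open scoped MatrixOrder in
/-- The square root of a positive semidefinite matrix. -/
noncomputable def Matrix.PosSemidef.sqrt {A : Matrix (Fin d) (Fin d) ℝ} (_ : A.PosSemidef) :
    Matrix (Fin d) (Fin d) ℝ := CFC.sqrt A

open scoped MatrixOrder in
lemma Matrix.PosSemidef.sqrt_mul_self {A : Matrix (Fin d) (Fin d) ℝ} (hA : A.PosSemidef) :
    hA.sqrt * hA.sqrt = A := CFC.sqrt_mul_sqrt_self A hA.nonneg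

open scoped MatrixOrder in
lemma Matrix.PosSemidef.posSemidef_sqrt {A : Matrix (Fin d) (Fin d) ℝ} (hA : A.PosSemidef) :
    hA.sqrt.PosSemidef := (CFC.sqrt_nonneg A).posSemidef

private lemma aux_det_nonneg {A : Matrix (Fin d) (Fin d) ℝ} (hA : A.PosSemidef) : 0 ≤ A.det := by
  rw [hA.isHermitian.det_eq_prod_eigenvalues]
  exact Finset.prod_nonneg fun i _ => by exact_mod_cast hA.eigenvalues_nonneg i

private lemma aux_one_le_det_one_add {R : Matrix (Fin d) (Fin d) ℝ} (hR : R.PosSemidef) :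
    (1:ℝ) ≤ (1 + R).det := by
  have h := hR.isHermitian.spectral_theorem
  set U := (Matrix.IsHermitian.eigenvectorUnitary hR.isHermitian : Matrix (Fin d) (Fin d) ℝ) with hU
  have hUU : U * star U = 1 :=
    Matrix.mem_unitaryGroup_iff.mp (Matrix.IsHermitian.eigenvectorUnitary hR.isHermitian).2
  have key : 1 + R = U * (1 + diagonal (RCLike.ofReal ∘ hR.isHermitian.eigenvalues)) * star U := by
    rw [Matrix.mul_add, Matrix.add_mul, Matrix.mul_one, hUU, ← (h.trans (Unitary.conjStarAlgAut_apply _ _))]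
  rw [key, det_mul_right_comm, hUU, one_mul]
  have : (1 : Matrix (Fin d) (Fin d) ℝ) + diagonal (RCLike.ofReal ∘ hR.isHermitian.eigenvalues)
      = diagonal (fun i => 1 + hR.isHermitian.eigenvalues i) := by
    rw [← diagonal_one, diagonal_add]
    congr 1
  rw [this, det_diagonal]
  have := Finset.prod_le_prod (s := Finset.univ) (f := fun _ : Fin d => (1:ℝ))
    (g := fun i => 1 + hR.isHermitian.eigenvalues i)
    (fun i _ => zero_le_one) (fun i _ => by
      have h0 : 0 ≤ hR.isHermitian.eigenvalues i := hR.eigenvalues_nonneg i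
      linarith)
  simpa using this

private lemma aux_sqrt_det_unit {P : Matrix (Fin d) (Fin d) ℝ} (hP : P.PosDef) :
    IsUnit (hP.posSemidef.sqrt).det := by
  have h : hP.posSemidef.sqrt.det * hP.posSemidef.sqrt.det = P.det := by
    rw [← det_mul, hP.posSemidef.sqrt_mul_self]
  have := hP.det_pos
  refine isUnit_iff_ne_zero.mpr fun h0 => ?_
  rw [h0, mul_zero] at h
  exact this.ne' h.symm

/-- `P + Q = S * (1 + S⁻¹ * Q * S⁻¹) * S` where `S` is the sqrt of the positive definite `P`. -/
private lemma aux_decomp {P : Matrix (Fin d) (Fin d) ℝ} (hP : P.PosDef)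
    (Q : Matrix (Fin d) (Fin d) ℝ) :
    P + Q = hP.posSemidef.sqrt * (1 + hP.posSemidef.sqrt⁻¹ * Q * hP.posSemidef.sqrt⁻¹)
      * hP.posSemidef.sqrt := by
  set S := hP.posSemidef.sqrt with hS
  have hdet := aux_sqrt_det_unit hP
  have h1 : S * S⁻¹ = 1 := mul_nonsing_inv _ hdet
  have h2 : S⁻¹ * S = 1 := nonsing_inv_mul _ hdet
  have hSS : S * S = P := hP.posSemidef.sqrt_mul_self
  rw [Matrix.mul_add, Matrix.add_mul, Matrix.mul_one, hSS]
  congr 1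
  symm
  calc S * (S⁻¹ * Q * S⁻¹) * S = (S * S⁻¹) * Q * (S⁻¹ * S) := by
        simp only [Matrix.mul_assoc]
    _ = Q := by rw [h1, h2, Matrix.one_mul, Matrix.mul_one]

private lemma aux_conj_psd {Q B : Matrix (Fin d) (Fin d) ℝ} (hQ : Q.PosSemidef)
    (hB : B.IsHermitian) : (B * Q * B).PosSemidef := by
  have := hQ.conjTranspose_mul_mul_same (B := B)
  rwa [hB] at this

private lemma aux_inv_psd_conj {P : Matrix (Fin d) (Fin d) ℝ} (hP : P.PosDef)
    {Q : Matrix (Fin d) (Fin d) ℝ} (hQ : Q.PosSemidef) :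
    (hP.posSemidef.sqrt⁻¹ * Q * hP.posSemidef.sqrt⁻¹).PosSemidef :=
  aux_conj_psd hQ hP.posSemidef.posSemidef_sqrt.isHermitian.inv

private lemma aux_det_le_det_add {P Q : Matrix (Fin d) (Fin d) ℝ} (hP : P.PosDef)
    (hQ : Q.PosSemidef) : P.det ≤ (P + Q).det := by
  set S := hP.posSemidef.sqrt with hS
  have hdet := aux_sqrt_det_unit hP
  have hdP : S.det * S.det = P.det := by rw [← det_mul, hP.posSemidef.sqrt_mul_self]
  rw [aux_decomp hP Q, det_mul, det_mul, mul_comm, ← mul_assoc, hdP]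
  nth_rewrite 1 [← mul_one P.det]
  exact mul_le_mul_of_nonneg_left (aux_one_le_det_one_add (aux_inv_psd_conj hP hQ))
    hP.det_pos.le

private lemma aux_one_sub_inv_psd {R : Matrix (Fin d) (Fin d) ℝ} (hR : R.PosSemidef) :
    (1 - (1 + R)⁻¹).PosSemidef := by
  have h1R : (1 + R).PosDef := Matrix.PosDef.one.add_posSemidef hR
  have hdet : IsUnit (1 + R).det := isUnit_iff_ne_zero.mpr h1R.det_pos.ne'
  set N := (1 + R)⁻¹ with hN
  have hN1 : N * (1 + R) = 1 := nonsing_inv_mul _ hdet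
  have h1N : (1 + R) * N = 1 := mul_nonsing_inv _ hdet
  have hNR : N * R = 1 - N := by
    have : N * (1 + R) = N + N * R := by rw [Matrix.mul_add, Matrix.mul_one]
    rw [this] at hN1
    linear_combination (norm := (noncomm_ring; skip)) hN1
  have hRN : R * N = 1 - N := by
    have : (1 + R) * N = N + R * N := by rw [Matrix.add_mul, Matrix.one_mul]
    rw [this] at h1N
    linear_combination (norm := (noncomm_ring; skip)) h1N
  have hRR : (R + R * R).PosSemidef := by
    have h2 : (R * R).PosSemidef := by
      have := posSemidef_conjTranspose_mul_self R
      rwa [hR.isHermitian] at this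
    exact hR.add h2
  have hNherm : N.IsHermitian := h1R.isHermitian.inv
  have key : 1 - N = N * (R + R * R) * N := by
    have h3 : (R + R * R) * N = R := by
      rw [Matrix.add_mul, Matrix.mul_assoc, hRN, Matrix.mul_sub, Matrix.mul_one, hRN]
      abel
    rw [Matrix.mul_assoc, h3, hNR]
  rw [key]
  exact aux_conj_psd hRR hNherm

private lemma aux_inv_sub_inv_psd {A B : Matrix (Fin d) (Fin d) ℝ} (hA : A.PosDef)
    (hB : B.PosSemidef) : (A⁻¹ - (A + B)⁻¹).PosSemidef := by
  set S := hA.posSemidef.sqrt with hS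
  have hdet := aux_sqrt_det_unit hA
  set R := S⁻¹ * B * S⁻¹ with hR
  have hRpsd : R.PosSemidef := aux_inv_psd_conj hA hB
  have hdecomp : A + B = S * (1 + R) * S := aux_decomp hA B
  have hinv : (A + B)⁻¹ = S⁻¹ * (1 + R)⁻¹ * S⁻¹ := by
    rw [hdecomp, Matrix.mul_inv_rev, Matrix.mul_inv_rev, Matrix.mul_assoc]
  have hAinv : A⁻¹ = S⁻¹ * 1 * S⁻¹ := by
    rw [Matrix.mul_one, ← Matrix.mul_inv_rev, hA.posSemidef.sqrt_mul_self]
  have key : A⁻¹ - (A + B)⁻¹ = S⁻¹ * (1 - (1 + R)⁻¹) * S⁻¹ := by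
    rw [hAinv, hinv, Matrix.mul_sub, Matrix.sub_mul]
  rw [key]
  exact aux_conj_psd (aux_one_sub_inv_psd hRpsd) hA.posSemidef.posSemidef_sqrt.isHermitian.inv

private lemma aux_posDef_of_det_ne_zero {A : Matrix (Fin d) (Fin d) ℝ} (hA : A.PosSemidef)
    (h : A.det ≠ 0) : A.PosDef := by
  exact hA.posDef_iff_det_ne_zero.mpr h

private lemma aux_det_factor {P : Matrix (Fin d) (Fin d) ℝ} (hP : P.PosDef)
    {C : Matrix (Fin d) (Fin d) ℝ} (hC : C.PosSemidef) :
    (P + C).det = P.det * (1 + hC.sqrt * P⁻¹ * hC.sqrt).det := by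
  set S := hP.posSemidef.sqrt with hS
  set W := hC.sqrt with hW
  have hdet := aux_sqrt_det_unit hP
  have hdP : S.det * S.det = P.det := by rw [← det_mul, hP.posSemidef.sqrt_mul_self]
  have hPinv : S⁻¹ * S⁻¹ = P⁻¹ := by
    rw [← Matrix.mul_inv_rev, hP.posSemidef.sqrt_mul_self]
  have hWW : W * W = C := hC.sqrt_mul_self
  rw [aux_decomp hP C, det_mul, det_mul, mul_comm, ← mul_assoc, hdP]
  congr 1
  have e1 : S⁻¹ * C * S⁻¹ = (S⁻¹ * W) * (W * S⁻¹) := by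
    rw [← hWW]; simp only [Matrix.mul_assoc]
  rw [e1, det_one_add_mul_comm]
  have e2 : W * S⁻¹ * (S⁻¹ * W) = W * P⁻¹ * W := by
    calc W * S⁻¹ * (S⁻¹ * W) = W * (S⁻¹ * S⁻¹) * W := by simp only [Matrix.mul_assoc]
      _ = W * P⁻¹ * W := by rw [hPinv]
  rw [e2]

/-- Lemma 2.3 of Tie et al.: for positive semidefinite `A`, `B`, `C`,
`det (A + B + C) * det A ≤ det (A + B) * det (A + C)`. -/
theorem det_add_add_mul_det_le {d : ℕ}
    (A B C : Matrix (Fin d) (Fin d) ℝ)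
    (hA : A.PosSemidef) (hB : B.PosSemidef) (hC : C.PosSemidef) :
    (A + B + C).det * A.det ≤ (A + B).det * (A + C).det := by
  by_cases h0 : A.det = 0
  · rw [h0, mul_zero]
    exact mul_nonneg (aux_det_nonneg (hA.add hB)) (aux_det_nonneg (hA.add hC))
  · have hApd : A.PosDef := aux_posDef_of_det_ne_zero hA h0
    have hABpd : (A + B).PosDef := hApd.add_posSemidef hB
    set W := hC.sqrt with hW
    have hWh : W.IsHermitian := hC.posSemidef_sqrt.isHermitian
    have e1 : (A + B + C).det = (A + B).det * (1 + W * (A + B)⁻¹ * W).det :=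
      aux_det_factor hABpd hC
    have e2 : (A + C).det = A.det * (1 + W * A⁻¹ * W).det := aux_det_factor hApd hC
    rw [e1, e2]
    have hD : (A⁻¹ - (A + B)⁻¹).PosSemidef := aux_inv_sub_inv_psd hApd hB
    have hWDW : (W * (A⁻¹ - (A + B)⁻¹) * W).PosSemidef := aux_conj_psd hD hWh
    have hWABW : (W * (A + B)⁻¹ * W).PosSemidef := aux_conj_psd hABpd.posSemidef.inv hWh
    have hP1 : (1 + W * (A + B)⁻¹ * W).PosDef := Matrix.PosDef.one.add_posSemidef hWABW
    have hsum : (1 + W * (A + B)⁻¹ * W) + W * (A⁻¹ - (A + B)⁻¹) * W = 1 + W * A⁻¹ * W := by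
      rw [Matrix.mul_sub, Matrix.sub_mul]
      abel
    have step : (1 + W * (A + B)⁻¹ * W).det ≤ (1 + W * A⁻¹ * W).det := by
      rw [← hsum]
      exact aux_det_le_det_add hP1 hWDW
    calc (A + B).det * (1 + W * (A + B)⁻¹ * W).det * A.det
        = ((A + B).det * A.det) * (1 + W * (A + B)⁻¹ * W).det := by ring
      _ ≤ ((A + B).det * A.det) * (1 + W * A⁻¹ * W).det :=
          mul_le_mul_of_nonneg_left step
            (mul_nonneg (aux_det_nonneg hABpd.posSemidef) (aux_det_nonneg hA))
      _ = (A + B).det * (A.det * (1 + W * A⁻¹ * W).det) := by ring
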